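/- Let B be an ordered category with finitely many objects and finite hom-sets whose additive cover ac(B) has binary products, and let I be an interior structure of B contained in the automorphism groups. Then in the exterior quotient B̃ = B/I, every morphism is an epimorphism. -/

import Mathlib

open CategoryTheory Limits

universe v u

/-- Objects of the additive cover `ac(B)`: finite families of `B`-objects. -/
structure ACObj (B : Type u) : Type (u + 1) where
  I : Type
  [fin : Finite I]
  obj : I → B

attribute [instance] ACObj.fin

/-- Morphisms of the additive cover. -/
structure ACHom {B : Type u} [Category.{v} B] (X Y : ACObj B) where
  f : X.I → Y.I
  φ : ∀ j : X.I, X.obj j ⟶ Y.obj (f j)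

/-- The additive cover `ac(B)` of a category `B`. -/
instance ACCategory (B : Type u) [Category.{v} B] : Category (ACObj B) where
  Hom := ACHom
  id X := ⟨fun j => j, fun j => 𝟙 _⟩
  comp {X Y Z} g h := ⟨fun j => h.f (g.f j), fun j => g.φ j ≫ h.φ (g.f j)⟩
  id_comp f := by
    cases f with
    | mk ff φ => simp only [Category.id_comp]
  comp_id f := by
    cases f with
    | mk ff φ => simp only [Category.comp_id]
  assoc f g h := by
    cases f; cases g; cases h; simp only [Category.assoc]

/-- The hom-relation defining the exterior quotient `B̃ = B/I` of `B` by an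
interior structure `I`: two morphisms `R ⟶ Q` are identified when they differ by
post-composition with an automorphism in `I(Q)`. -/
def extRel {B : Type u} [Category.{v} B] (I : ∀ Q : B, Subgroup (Aut Q)) :
    HomRel B :=
  fun {_ Q} f g => ∃ χ ∈ I Q, g = f ≫ χ.hom

/-- A single `B`-object viewed as an object of `ac(B)`. -/
def ACSingle {B : Type u} [Category.{v} B] (S : B) : ACObj B :=
  { I := Unit, obj := fun _ => S }

attribute [reducible] ACSingle

/-- A single `B`-morphism viewed as a morphism of `ac(B)`. -/
def ACSingleHom {B : Type u} [Category.{v} B] {Q S : B} (α : Q ⟶ S) :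
    ACSingle Q ⟶ ACSingle S :=
  ⟨fun _ => (), fun _ => α⟩

theorem ACSingleHom_comp {B : Type u} [Category.{v} B] {Q S T : B}
    (α : Q ⟶ S) (β : S ⟶ T) :
    ACSingleHom α ≫ ACSingleHom β = ACSingleHom (α ≫ β) := rfl

/-- The component of a morphism into a single object. -/
def ACPhiAt {B : Type u} [Category.{v} B] {X : ACObj B} {S : B}
    (g : X ⟶ ACSingle S) (j : X.I) : X.obj j ⟶ S :=
  ACHom.φ g j

theorem AC_phi_eq {B : Type u} [Category.{v} B] {X : ACObj B} {S : B}
    {g h : X ⟶ ACSingle S} (e : g = h) (j : X.I) :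
    ACPhiAt g j = ACPhiAt h j := by rw [e]

theorem ACphi_congr {B : Type u} [Category.{v} B] {P : ACObj B} {S : B}
    (F : P ⟶ ACSingle S) {i j : P.I} (h : i = j) :
    F.φ i = eqToHom (congrArg P.obj h) ≫ F.φ j := by
  subst h; simp

theorem exterior_epi_key {B : Type u} [Category.{v} B]
    (hord : ∀ Q R : B, Nonempty (R ⟶ Q) → Nonempty (Q ⟶ R) →
      ∀ f : R ⟶ Q, IsIso f)
    [HasBinaryProducts (ACObj B)]
    {R Q S : B} (φ : R ⟶ Q) (γ δ : Q ⟶ S) (χ : Aut S)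
    (hc : φ ≫ δ = φ ≫ γ ≫ χ.hom) : δ = γ ≫ χ.hom := by
  set P : ACObj B := Limits.prod (ACSingle S) (ACSingle S) with hP
  set lam : ACSingle Q ⟶ P := prod.lift (ACSingleHom γ) (ACSingleHom δ) with hlam
  set mu : ACSingle S ⟶ P := prod.lift (ACSingleHom (𝟙 S)) (ACSingleHom χ.hom) with hmu
  -- uniqueness: the two factorizations of the pair (φ≫γ, φ≫δ) agree
  have h5 : ACSingleHom φ ≫ lam = ACSingleHom (φ ≫ γ) ≫ mu := by
    apply Limits.prod.hom_ext
    · rw [Category.assoc, Category.assoc, prod.lift_fst, prod.lift_fst,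
        ACSingleHom_comp, ACSingleHom_comp, Category.comp_id]
    · rw [Category.assoc, Category.assoc, prod.lift_snd, prod.lift_snd,
        ACSingleHom_comp, ACSingleHom_comp, hc, Category.assoc]
  have hj : lam.f () = mu.f () :=
    congrArg (fun k : ACHom (ACSingle R) P => k.f ()) h5
  -- component-level equations
  have eγ : lam ≫ prod.fst = ACSingleHom γ := prod.lift_fst _ _
  have eδ : lam ≫ prod.snd = ACSingleHom δ := prod.lift_snd _ _
  have eμ1 : mu ≫ prod.fst = ACSingleHom (𝟙 S) := prod.lift_fst _ _
  have eμ2 : mu ≫ prod.snd = ACSingleHom χ.hom := prod.lift_snd _ _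
  have hγ : lam.φ () ≫ (prod.fst : P ⟶ ACSingle S).φ (lam.f ()) = γ := AC_phi_eq eγ ()
  have hδ : lam.φ () ≫ (prod.snd : P ⟶ ACSingle S).φ (lam.f ()) = δ := AC_phi_eq eδ ()
  have hμ1 : mu.φ () ≫ (prod.fst : P ⟶ ACSingle S).φ (mu.f ()) = 𝟙 S := AC_phi_eq eμ1 ()
  have hμ2 : mu.φ () ≫ (prod.snd : P ⟶ ACSingle S).φ (mu.f ()) = χ.hom := AC_phi_eq eμ2 ()
  set j := mu.f ()
  set b : S ⟶ P.obj j := mu.φ () with hb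
  set a : Q ⟶ P.obj j := lam.φ () ≫ eqToHom (congrArg P.obj hj) with ha
  have h1 : a ≫ (prod.fst : P ⟶ ACSingle S).φ j = γ := by
    rw [ha]; erw [Category.assoc, ← ACphi_congr (prod.fst : P ⟶ ACSingle S) hj, hγ]
  have h2 : a ≫ (prod.snd : P ⟶ ACSingle S).φ j = δ := by
    rw [ha]; erw [Category.assoc, ← ACphi_congr (prod.snd : P ⟶ ACSingle S) hj, hδ]
  -- b is an isomorphism by the ordered property
  have hiso : IsIso b := hord _ _ ⟨b⟩ ⟨(prod.fst : P ⟶ ACSingle S).φ j⟩ b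
  have hinv : (prod.fst : P ⟶ ACSingle S).φ j ≫ b = 𝟙 _ := by
    have : inv b = (prod.fst : P ⟶ ACSingle S).φ j := IsIso.inv_eq_of_hom_inv_id hμ1
    rw [← this]; exact IsIso.inv_hom_id b
  calc δ = a ≫ (prod.snd : P ⟶ ACSingle S).φ j := h2.symm
    _ = a ≫ ((prod.fst : P ⟶ ACSingle S).φ j ≫ b) ≫ (prod.snd : P ⟶ ACSingle S).φ j := by
        rw [hinv, Category.id_comp]
    _ = (a ≫ (prod.fst : P ⟶ ACSingle S).φ j) ≫ (b ≫ (prod.snd : P ⟶ ACSingle S).φ j) := by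
        simp only [Category.assoc]
    _ = γ ≫ χ.hom := by rw [h1, hμ2]

/-- If `B` is an ordered category with finitely many objects and finite
hom-sets whose additive cover has binary products (`B` is multiplicative), and
`I` is an interior structure of `B`, then every morphism of the exterior
quotient `B̃ = B/I` is an epimorphism. -/
theorem exterior_quotient_epi
    {B : Type u} [Category.{v} B] [Finite B]
    (hfin : ∀ Q R : B, Finite (Q ⟶ R))
    (hord : ∀ Q R : B, Nonempty (R ⟶ Q) → Nonempty (Q ⟶ R) →
      ∀ f : R ⟶ Q, IsIso f)
    [HasBinaryProducts (ACObj B)]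
    (I : ∀ Q : B, Subgroup (Aut Q))
    (hI : ∀ {R Q : B} (φ : R ⟶ Q), ∀ ρ ∈ I R, ∃ χ ∈ I Q,
      ρ.hom ≫ φ = φ ≫ χ.hom) :
    ∀ {X Y : CategoryTheory.Quotient (extRel I)} (f : X ⟶ Y), Epi f := by
  haveI hcong : Congruence (extRel I) := by
    refine (fun (h1 : ∀ {X Y : B}, _root_.Equivalence (@extRel B _ I X Y)) (h2 : ∀ {X Y Z : B} (f : X ⟶ Y) {g g' : Y ⟶ Z}, extRel I g g' → extRel I (f ≫ g) (f ≫ g')) (h3 : ∀ {X Y Z : B} {f f' : X ⟶ Y} (g : Y ⟶ Z), extRel I f f' → extRel I (f ≫ g) (f' ≫ g)) => @Congruence.mk _ _ _ ⟨h2⟩ ⟨h3⟩ h1) @?_ @?_ @?_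
    · intro X Y
      constructor
      · intro f; exact ⟨1, one_mem _, (Category.comp_id f).symm⟩
      · rintro f g ⟨χ, hχ, rfl⟩
        exact ⟨χ⁻¹, inv_mem hχ, by rw [Category.assoc]; exact ((congrArg (f ≫ ·) (Iso.hom_inv_id (show Y ≅ Y from χ))).trans (Category.comp_id f)).symm⟩
      · rintro f g h ⟨χ, hχ, rfl⟩ ⟨χ', hχ', rfl⟩
        exact ⟨χ' * χ, mul_mem hχ' hχ, by exact Category.assoc f (show Y ≅ Y from χ).hom (show Y ≅ Y from χ').hom⟩
    · rintro X Y Z f g g' ⟨χ, hχ, rfl⟩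
      exact ⟨χ, hχ, by simp⟩
    · rintro X Y Z f f' g ⟨χ, hχ, rfl⟩
      obtain ⟨χ', hχ', hcomm⟩ := hI g χ hχ
      exact ⟨χ', hχ', by rw [Category.assoc, hcomm, Category.assoc]⟩
  rintro ⟨X⟩ ⟨Y⟩ ⟨f⟩
  constructor
  rintro ⟨Z⟩ g h w
  obtain ⟨γ, rfl⟩ := Quot.exists_rep g
  obtain ⟨δ, rfl⟩ := Quot.exists_rep h
  have w' : (Quotient.functor (extRel I)).map (f ≫ γ) =
      (Quotient.functor (extRel I)).map (f ≫ δ) := by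
    simpa only [Functor.map_comp] using! w
  obtain ⟨χ, hχ, hc⟩ := (Quotient.functor_map_eq_iff (extRel I) _ _).mp w'
  have : extRel I γ δ :=
    ⟨χ, hχ, exterior_epi_key hord f γ δ χ (by simpa using hc)⟩
  exact CategoryTheory.Quotient.sound _ this
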